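/- Let c ∈ ℂ and B > 0 be a real number. Then ln(1 + |c|²/B) = sup over t ≥ 0 and β ∈ ℂ of [ ln(1+t) − t + 2·√(1+t)·Re(conj(β)·c) − |β|²·(|c|² + B) ], and the supremum is attained at t = |c|²/B and β = √(1+t)·c/(|c|² + B). -/

import Mathlib

open scoped BigOperators

/-- Combined Lagrangian-dual and quadratic transform of a single rate term:
`ln(1 + |c|²/B)` equals the supremum over `t ≥ 0` and `β ∈ ℂ` of
`ln(1+t) − t + 2√(1+t)·Re(conj(β)·c) − |β|²(|c|² + B)`, and the supremum is attained
at `t = |c|²/B`, `β = √(1+t)·c/(|c|² + B)`. -/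
theorem single_term_joint_transform (c : ℂ) (B : ℝ) (hB : 0 < B) :
    (((Real.log (1 + ‖c‖ ^ 2 / B) : ℝ) : EReal) =
      ⨆ p : {t : ℝ // 0 ≤ t} × ℂ,
        ((Real.log (1 + p.1.1) - p.1.1
            + 2 * Real.sqrt (1 + p.1.1) * ((starRingEnd ℂ) p.2 * c).re
            - ‖p.2‖ ^ 2 * (‖c‖ ^ 2 + B) : ℝ) : EReal))
    ∧
    (Real.log (1 + ‖c‖ ^ 2 / B) =
      Real.log (1 + ‖c‖ ^ 2 / B) - ‖c‖ ^ 2 / B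
        + 2 * Real.sqrt (1 + ‖c‖ ^ 2 / B) *
            ((starRingEnd ℂ)
                ((Real.sqrt (1 + ‖c‖ ^ 2 / B) : ℂ) * c /
                  ((‖c‖ ^ 2 + B : ℝ) : ℂ)) * c).re
        - ‖(Real.sqrt (1 + ‖c‖ ^ 2 / B) : ℂ) * c /
              ((‖c‖ ^ 2 + B : ℝ) : ℂ)‖ ^ 2 * (‖c‖ ^ 2 + B)) := by
  set A : ℝ := ‖c‖ ^ 2 with hA
  have hA0 : 0 ≤ A := sq_nonneg _
  have hAB : 0 < A + B := by linarith
  set s : ℝ := Real.sqrt (1 + A / B) with hs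
  have hs0 : 0 ≤ s := Real.sqrt_nonneg _
  have hs2 : s ^ 2 = 1 + A / B := Real.sq_sqrt (by positivity)
  -- computations for the optimal β
  have hre : ((starRingEnd ℂ) ((s:ℂ) * c / ((A + B : ℝ):ℂ)) * c).re = s * A / (A + B) := by
    have h : ((s:ℂ) * c / ((A + B : ℝ):ℂ)) = (((s / (A + B) : ℝ)):ℂ) * c := by push_cast; ring
    rw [h, map_mul, Complex.conj_ofReal, mul_assoc, Complex.conj_mul']
    simp only [← Complex.ofReal_pow, ← Complex.ofReal_mul,
      Complex.ofReal_re, ← hA]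
    ring
  have habs : ‖(s:ℂ) * c / ((A + B : ℝ):ℂ)‖ ^ 2 = s ^ 2 * A / (A + B) ^ 2 := by
    rw [norm_div, norm_mul,
      Complex.norm_of_nonneg hs0, Complex.norm_of_nonneg hAB.le, div_pow, mul_pow, ← hA]
  have key : Real.log (1 + A / B) =
      Real.log (1 + A / B) - A / B
        + 2 * s * ((starRingEnd ℂ) ((s:ℂ) * c / ((A + B : ℝ):ℂ)) * c).re
        - ‖(s:ℂ) * c / ((A + B : ℝ):ℂ)‖ ^ 2 * (A + B) := by
    rw [hre, habs]
    have e1 : 2 * s * (s * A / (A + B)) - s ^ 2 * A / (A + B) ^ 2 * (A + B) = A / B := by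
      calc 2 * s * (s * A / (A + B)) - s ^ 2 * A / (A + B) ^ 2 * (A + B)
            = s ^ 2 * (A / (A + B)) := by field_simp; ring
        _ = (1 + A / B) * (A / (A + B)) := by rw [hs2]
        _ = A / B := by field_simp; ring
    linarith [e1]
  refine ⟨?_, key⟩
  apply le_antisymm
  · have h := le_iSup (fun p : {t : ℝ // 0 ≤ t} × ℂ =>
        ((Real.log (1 + p.1.1) - p.1.1
            + 2 * Real.sqrt (1 + p.1.1) * ((starRingEnd ℂ) p.2 * c).re
            - ‖p.2‖ ^ 2 * (‖c‖ ^ 2 + B) : ℝ) : EReal))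
        (⟨⟨A / B, by positivity⟩, (s:ℂ) * c / ((A + B : ℝ):ℂ)⟩)
    refine le_trans (le_of_eq ?_) h
    exact_mod_cast congrArg (fun x : ℝ => (x : EReal)) key
  · apply iSup_le
    rintro ⟨⟨t, ht⟩, β⟩
    apply EReal.coe_le_coe_iff.mpr
    simp only
    set u : ℝ := Real.sqrt (1 + t) with hu
    have hu0 : 0 ≤ u := Real.sqrt_nonneg _
    have hu2 : u ^ 2 = 1 + t := Real.sq_sqrt (by linarith)
    set b : ℝ := ‖β‖ with hb
    have hb0 : 0 ≤ b := norm_nonneg _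
    have hc0 : 0 ≤ ‖c‖ := norm_nonneg _
    have h1 : ((starRingEnd ℂ) β * c).re ≤ b * ‖c‖ := by
      calc ((starRingEnd ℂ) β * c).re ≤ ‖(starRingEnd ℂ) β * c‖ :=
            Complex.re_le_norm _
        _ = b * ‖c‖ := by rw [norm_mul, Complex.norm_conj]
    -- quadratic in b
    have h2 : 2 * u * (b * ‖c‖) - b ^ 2 * (A + B) ≤ u ^ 2 * A / (A + B) := by
      rw [le_div_iff₀ hAB]
      nlinarith [sq_nonneg (b * (A + B) - u * ‖c‖), hAB]
    -- log inequality
    have h3 : Real.log (1 + t) - Real.log (1 + A / B) ≤ t - (1 + t) * A / (A + B) := by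
      have hx : (0:ℝ) < (1 + t) * B / (A + B) := by positivity
      have hlog := Real.log_le_sub_one_of_pos hx
      have e1 : Real.log ((1 + t) * B / (A + B)) =
          Real.log (1 + t) - Real.log (1 + A / B) := by
        rw [Real.log_div (by positivity) (by positivity), Real.log_mul (by linarith) hB.ne']
        have : Real.log (1 + A / B) = Real.log (A + B) - Real.log B := by
          rw [show (1 : ℝ) + A / B = (A + B) / B by field_simp; ring,
            Real.log_div hAB.ne' hB.ne']
        rw [this]; ring
      rw [e1] at hlog
      have e2 : (1 + t) * B / (A + B) - 1 = t - (1 + t) * A / (A + B) := by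
        field_simp
        ring
      linarith [hlog, e2.ge, e2.le]
    have hmul : 2 * u * ((starRingEnd ℂ) β * c).re ≤ 2 * u * (b * ‖c‖) := by
      apply mul_le_mul_of_nonneg_left h1 (by positivity)
    rw [hu2] at h2
    linarith [h2, h3, hmul]
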